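/- The set {1 (mod 2), 0 (mod 3), 0 (mod 4), 2 (mod 8), 2 (mod 12), 22 (mod 24)} is a covering system of the integers. -/
import Mathlib
theorem chen_covering_system_two (k : ℤ) :
    k ≡ 1 [ZMOD 2] ∨ k ≡ 0 [ZMOD 3] ∨ k ≡ 0 [ZMOD 4] ∨
    k ≡ 2 [ZMOD 8] ∨ k ≡ 2 [ZMOD 12] ∨ k ≡ 22 [ZMOD 24] := by
  simp only [Int.ModEq]
  obtain ⟨q, r, hr0, hr1, hk⟩ : ∃ q r, 0 ≤ r ∧ r < 24 ∧ k = 24 * q + r :=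
    ⟨k / 24, k % 24, Int.emod_nonneg k (by norm_num), Int.emod_lt_of_pos k (by norm_num),
      (Int.mul_ediv_add_emod k 24).symm⟩
  subst hk
  interval_cases r <;> omega
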